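/- In the ideal I of F⟨X⟩ generated by all substitutions of distinct variables into Γ₃, St₃, T₄, one has Γ_m(x₁,…,x_m) ∈ I for every m ≥ 3, where Γ_m(x₁,…,x_m) = [[x₁,x₂], x₃⋯x_m]. In particular, the L-ideal generated by {Γ_m (m ≥ 3), St₃, T₄} equals I. -/

import Mathlib

open FreeAlgebra

/-- Γ₃(x_i, x_j, x_k) = [[x_i, x_j], x_k] in the free algebra. -/
noncomputable def Gamma3 (F : Type) [Field F] (i j k : ℕ) : FreeAlgebra F ℕ :=
  (ι F i * ι F j - ι F j * ι F i) * ι F k - ι F k * (ι F i * ι F j - ι F j * ι F i)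

/-- St₃(x_i, x_j, x_k) = x_i[x_j,x_k] - x_j[x_i,x_k] + x_k[x_i,x_j]. -/
noncomputable def St3 (F : Type) [Field F] (i j k : ℕ) : FreeAlgebra F ℕ :=
  ι F i * (ι F j * ι F k - ι F k * ι F j) - ι F j * (ι F i * ι F k - ι F k * ι F i) +
    ι F k * (ι F i * ι F j - ι F j * ι F i)

/-- T₄(x_i, x_j, x_k, x_l) = [x_i,x_j][x_k,x_l] - [x_i,x_k][x_j,x_l] + [x_j,x_k][x_i,x_l]. -/
noncomputable def T4 (F : Type) [Field F] (i j k l : ℕ) : FreeAlgebra F ℕ :=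
  (ι F i * ι F j - ι F j * ι F i) * (ι F k * ι F l - ι F l * ι F k) -
    (ι F i * ι F k - ι F k * ι F i) * (ι F j * ι F l - ι F l * ι F j) +
    (ι F j * ι F k - ι F k * ι F j) * (ι F i * ι F l - ι F l * ι F i)

/-- The generators of the ideal `I`: all substitutions of variables into Γ₃, St₃, T₄. -/
def weakGen (F : Type) [Field F] : Set (FreeAlgebra F ℕ) :=
  {g | (∃ i j k, g = Gamma3 F i j k) ∨ (∃ i j k, g = St3 F i j k) ∨
      (∃ i j k l, g = T4 F i j k l)}

/-- The two-sided ideal `I` of the free algebra generated by all substitutions of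
variables into Γ₃, St₃, T₄, realized as the span of `a * g * b`. -/
noncomputable def weakIdeal (F : Type) [Field F] : Submodule F (FreeAlgebra F ℕ) :=
  Submodule.span F {x | ∃ (a : FreeAlgebra F ℕ) (g : FreeAlgebra F ℕ) (b : FreeAlgebra F ℕ),
    g ∈ weakGen F ∧ x = a * g * b}

/-- Γ_m(x_{v 1},…,x_{v m}) = [[x_{v 1},x_{v 2}], x_{v 3}⋯x_{v m}] for a substitution . -/
noncomputable def GammaM (F : Type) [Field F] (m : ℕ) (v : ℕ → ℕ) : FreeAlgebra F ℕ :=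
  (ι F (v 1) * ι F (v 2) - ι F (v 2) * ι F (v 1)) *
      (((List.Ico 3 (m + 1)).map fun i => ι F (v i)).prod) -
    (((List.Ico 3 (m + 1)).map fun i => ι F (v i)).prod) *
      (ι F (v 1) * ι F (v 2) - ι F (v 2) * ι F (v 1))

lemma weakIdeal_mul_left (F : Type) [Field F] (y : FreeAlgebra F ℕ) {x}
    (hx : x ∈ weakIdeal F) : y * x ∈ weakIdeal F := by
  induction hx using Submodule.span_induction with
  | mem x hx =>
    obtain ⟨a, g, b, hg, rfl⟩ := hx
    exact Submodule.subset_span ⟨y * a, g, b, hg, by simp [mul_assoc]⟩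
  | zero => simp [(weakIdeal F).zero_mem]
  | add a b _ _ ha hb => rw [mul_add]; exact (weakIdeal F).add_mem ha hb
  | smul c a _ ha => rw [mul_smul_comm]; exact (weakIdeal F).smul_mem c ha

lemma weakIdeal_mul_right (F : Type) [Field F] (y : FreeAlgebra F ℕ) {x}
    (hx : x ∈ weakIdeal F) : x * y ∈ weakIdeal F := by
  induction hx using Submodule.span_induction with
  | mem x hx =>
    obtain ⟨a, g, b, hg, rfl⟩ := hx
    exact Submodule.subset_span ⟨a, g, b * y, hg, by simp [mul_assoc]⟩
  | zero => simp [(weakIdeal F).zero_mem]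
  | add a b _ _ ha hb => rw [add_mul]; exact (weakIdeal F).add_mem ha hb
  | smul c a _ ha => rw [smul_mul_assoc]; exact (weakIdeal F).smul_mem c ha

lemma comm_list_mem (F : Type) [Field F] (i j : ℕ) (l : List ℕ) :
    (ι F i * ι F j - ι F j * ι F i) * ((l.map (ι F)).prod) -
      ((l.map (ι F)).prod) * (ι F i * ι F j - ι F j * ι F i) ∈ weakIdeal F := by
  induction l with
  | nil => simp [(weakIdeal F).zero_mem]
  | cons k t ih =>
    set c := ι F i * ι F j - ι F j * ι F i with hc
    set P := ((t.map (ι F)).prod) with hP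
    have key : c * ((ι F k * P)) - (ι F k * P) * c
        = (c * ι F k - ι F k * c) * P + ι F k * (c * P - P * c) := by noncomm_ring
    rw [List.map_cons, List.prod_cons, key]
    refine (weakIdeal F).add_mem ?_ (weakIdeal_mul_left F _ ih)
    have : (c * ι F k - ι F k * c) * P = 1 * Gamma3 F i j k * P := by
      simp [Gamma3, hc]
    rw [this]
    exact Submodule.subset_span ⟨1, Gamma3 F i j k, P, Or.inl ⟨i, j, k, rfl⟩, rfl⟩

lemma GammaM_mem (F : Type) [Field F] (m : ℕ) (v : ℕ → ℕ) :
    GammaM F m v ∈ weakIdeal F := by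
  have h := comm_list_mem F (v 1) (v 2) ((List.Ico 3 (m + 1)).map v)
  simpa [GammaM, List.map_map, Function.comp_def] using h


/-- Γ_m ∈ I for every m ≥ 3, and the ideal generated by all substitutions of
{Γ_m (m ≥ 3), St₃, T₄} coincides with I. -/
theorem GammaM_mem_weakIdeal (F : Type) [Field F] :
    (∀ m : ℕ, 3 ≤ m → GammaM F m id ∈ weakIdeal F) ∧
    Submodule.span F {x : FreeAlgebra F ℕ | ∃ a g b, ((∃ m ≥ 3, ∃ v : ℕ → ℕ, g = GammaM F m v) ∨
        (∃ i j k, g = St3 F i j k) ∨ (∃ i j k l, g = T4 F i j k l)) ∧ x = a * g * b} =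
      weakIdeal F := by
  constructor
  · intro m _; exact GammaM_mem F m id
  · apply le_antisymm
    · rw [Submodule.span_le]
      rintro x ⟨a, g, b, hg, rfl⟩
      rcases hg with ⟨m, _, v, rfl⟩ | h | h
      · exact weakIdeal_mul_right F b (weakIdeal_mul_left F a (GammaM_mem F m v))
      · exact Submodule.subset_span ⟨a, g, b, Or.inr (Or.inl h), rfl⟩
      · exact Submodule.subset_span ⟨a, g, b, Or.inr (Or.inr h), rfl⟩
    · rw [weakIdeal, Submodule.span_le]
      rintro x ⟨a, g, b, hg, rfl⟩
      rcases hg with ⟨i, j, k, rfl⟩ | h | h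
      · refine Submodule.subset_span ⟨a, _, b, Or.inl ⟨3, le_refl 3,
          fun n => if n = 1 then i else if n = 2 then j else k, ?_⟩, rfl⟩
        have : List.Ico 3 4 = [3] := rfl
        simp [GammaM, Gamma3, this]
      · exact Submodule.subset_span ⟨a, g, b, Or.inr (Or.inl h), rfl⟩
      · exact Submodule.subset_span ⟨a, g, b, Or.inr (Or.inr h), rfl⟩
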